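/- For all integers 0 ≤ m ≤ d, the set Int_m ⊆ ({•,+,−}^d)² has exactly (d choose m)·2^{d−m} elements. -/

import Mathlib

/-- The three possible entries of a cell label of the hypercube:
`dot` = `•` (a spanned direction), `pls` = `+`, `mns` = `−`. -/
inductive Sgn : Type
  | dot : Sgn
  | pls : Sgn
  | mns : Sgn
  deriving DecidableEq

instance : Fintype Sgn :=
  ⟨{Sgn.dot, Sgn.pls, Sgn.mns}, fun x => by cases x <;> simp⟩

/-- A cell of the `d`-dimensional hypercube, labeled by a tuple in `{•,+,−}^d`. -/
abbrev Cell (d : ℕ) := Fin d → Sgn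

/-- A `ℤ₂`-cochain on the `d`-dimensional hypercube. -/
abbrev Cochain (d : ℕ) := Cell d → ZMod 2

/-- The top cell `(•,…,•)`. -/
def topCell (d : ℕ) : Cell d := fun _ => Sgn.dot

/-- The set of coordinates of a cell labeled `•`. -/
def dots {d : ℕ} (w : Cell d) : Finset (Fin d) :=
  Finset.univ.filter (fun j => w j = Sgn.dot)

/-- The coboundary of a `ℤ₂`-cochain: `(δα)(w)` is the sum of `α` over all cells obtained
from `w` by replacing exactly one entry equal to `•` by `+` or by `−`. -/
def delta {d : ℕ} (α : Cochain d) : Cochain d := fun w =>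
  ∑ j ∈ dots w, (α (Function.update w j Sgn.pls) + α (Function.update w j Sgn.mns))

/-- The set of coordinates where both `z` and `z'` are `•`. -/
def bothDot {d : ℕ} (z z' : Cell d) : Finset (Fin d) :=
  Finset.univ.filter (fun j => z j = Sgn.dot ∧ z' j = Sgn.dot)

/-- The allowed values of `(z_j, z'_j)` at a coordinate `j` not in the common-`•` set `I`:
`(+,•)` or `(•,−)` when `ℓ(j) = #{i ∈ I : i < j}` is even, and `(−,•)` or `(•,+)` when it
is odd. -/
def pairCond {d : ℕ} (I : Finset (Fin d)) (j : Fin d) (a b : Sgn) : Prop :=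
  if (I.filter (fun i => i < j)).card % 2 = 0 then
    (a = Sgn.pls ∧ b = Sgn.dot) ∨ (a = Sgn.dot ∧ b = Sgn.mns)
  else
    (a = Sgn.mns ∧ b = Sgn.dot) ∨ (a = Sgn.dot ∧ b = Sgn.pls)

/-- The pairs `(z,z')` appearing in the `m`-th higher cup product evaluated on the cell `w`:
the entries of `w` equal to `+` or `−` are fixed in both arguments, there are exactly `m`
coordinates where both `z` and `z'` are `•`, and at the remaining `•`-coordinates of `w`
the parity condition `pairCond` holds. -/
def IntPair {d : ℕ} (m : ℕ) (w z z' : Cell d) : Prop :=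
  (∀ j, w j ≠ Sgn.dot → z j = w j ∧ z' j = w j) ∧
    (bothDot z z').card = m ∧
    ∀ j, w j = Sgn.dot → j ∉ bothDot z z' → pairCond (bothDot z z') j (z j) (z' j)

open Classical in
/-- The finite set of pairs in `Int_m` relative to the cell `w`. -/
noncomputable def intPairs {d : ℕ} (m : ℕ) (w : Cell d) : Finset (Cell d × Cell d) :=
  Finset.univ.filter (fun p => IntPair m w p.1 p.2)

/-- The higher cup product `α ∪_m β` of `ℤ₂`-cochains:
`(α ∪_m β)(w) = Σ_{(z,z') ∈ Int_m(w)} α(z)·β(z')`. -/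
noncomputable def cup {d : ℕ} (m : ℕ) (α β : Cochain d) : Cochain d := fun w =>
  ∑ p ∈ intPairs m w, α p.1 * β p.2

/-- For all integers `0 ≤ m ≤ d`, the set `Int_m ⊆ ({•,+,−}^d)²`
(the pairs appearing in the `m`-th higher cup product on the top cell) has exactly
`(d choose m)·2^{d−m}` elements. -/

lemma mem_intPairs {d m : ℕ} {w : Cell d} {p : Cell d × Cell d} :
    p ∈ intPairs m w ↔ IntPair m w p.1 p.2 := by
  simp [intPairs]

/-- Build a pair `(z,z')` from the common-dot set `I` and the set `S ⊆ Iᶜ` of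
coordinates where `z` is `•`. -/
def mkPair {d : ℕ} (I S : Finset (Fin d)) : Cell d × Cell d :=
  (fun j => if j ∈ I then Sgn.dot else if j ∈ S then Sgn.dot
      else if (I.filter (fun i => i < j)).card % 2 = 0 then Sgn.pls else Sgn.mns,
   fun j => if j ∈ I then Sgn.dot else if j ∈ S then
      (if (I.filter (fun i => i < j)).card % 2 = 0 then Sgn.mns else Sgn.pls)
      else Sgn.dot)

lemma bothDot_mkPair {d : ℕ} (I S : Finset (Fin d)) :
    bothDot (mkPair I S).1 (mkPair I S).2 = I := by
  ext j
  simp only [bothDot, mkPair, Finset.mem_filter, Finset.mem_univ, true_and]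
  by_cases hI : j ∈ I
  · simp [hI]
  · by_cases hS : j ∈ S
    · simp [hI, hS]
      split <;> simp
    · simp [hI, hS]
      split <;> simp

lemma intPair_mkPair {d m : ℕ} {I S : Finset (Fin d)} (hI : I.card = m)
    (hS : S ⊆ Iᶜ) : IntPair m (topCell d) (mkPair I S).1 (mkPair I S).2 := by
  refine ⟨fun j hj => absurd rfl hj, by rw [bothDot_mkPair]; exact hI, ?_⟩
  intro j _ hj
  rw [bothDot_mkPair] at hj ⊢
  unfold pairCond mkPair
  by_cases hSj : j ∈ S
  · by_cases hc : (I.filter (fun i => i < j)).card % 2 = 0 <;>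
      simp [hj, hSj, hc]
  · by_cases hc : (I.filter (fun i => i < j)).card % 2 = 0 <;>
      simp [hj, hSj, hc]

theorem intPairs_card (d m : ℕ) (hmd : m ≤ d) :
    (intPairs m (topCell d)).card = d.choose m * 2 ^ (d - m) := by
  classical
  have H : ∀ p ∈ intPairs m (topCell d),
      bothDot p.1 p.2 ∈ Finset.univ.powersetCard m := by
    intro p hp
    rw [Finset.mem_powersetCard_univ]
    exact (mem_intPairs.mp hp).2.1
  rw [Finset.card_eq_sum_card_fiberwise H]
  have key : ∀ I ∈ (Finset.univ : Finset (Fin d)).powersetCard m,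
      ((intPairs m (topCell d)).filter (fun p => bothDot p.1 p.2 = I)).card
        = 2 ^ (d - m) := by
    intro I hI
    rw [Finset.mem_powersetCard_univ] at hI
    have hcard : (Iᶜ : Finset (Fin d)).powerset.card = 2 ^ (d - m) := by
      rw [Finset.card_powerset, Finset.card_compl, hI, Fintype.card_fin]
    rw [← hcard]
    apply Finset.card_bij' (fun p _ => dots p.1 \ I) (fun S _ => mkPair I S)
    · intro p hp
      rw [Finset.mem_powerset]
      intro j hj
      simp only [Finset.mem_sdiff] at hj
      simp [Finset.mem_compl, hj.2]
    · intro S hS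
      rw [Finset.mem_powerset] at hS
      refine Finset.mem_filter.mpr ⟨mem_intPairs.mpr (intPair_mkPair hI hS), bothDot_mkPair I S⟩
    · -- left inverse : mkPair I (dots p.1 \ I) = p
      intro p hp
      rw [Finset.mem_filter] at hp
      obtain ⟨hp1, hp2⟩ := hp
      rw [mem_intPairs] at hp1
      obtain ⟨-, -, h3⟩ := hp1
      rw [hp2] at h3
      have hdot : ∀ j ∈ I, p.1 j = Sgn.dot ∧ p.2 j = Sgn.dot := by
        intro j hj
        rw [← hp2] at hj
        simp only [bothDot, Finset.mem_filter] at hj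
        exact hj.2
      refine Prod.ext (funext fun j => ?_) (funext fun j => ?_)
      · by_cases hjI : j ∈ I
        · simp [mkPair, hjI, (hdot j hjI).1]
        · have hpc := h3 j rfl hjI
          unfold pairCond at hpc
          by_cases hc : (I.filter (fun i => i < j)).card % 2 = 0
          · rw [if_pos hc] at hpc
            rcases hpc with ⟨ha, hb⟩ | ⟨ha, hb⟩ <;> simp [mkPair, hjI, dots, ha, hc]
          · rw [if_neg hc] at hpc
            rcases hpc with ⟨ha, hb⟩ | ⟨ha, hb⟩ <;> simp [mkPair, hjI, dots, ha, hc]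
      · by_cases hjI : j ∈ I
        · simp [mkPair, hjI, (hdot j hjI).2]
        · have hpc := h3 j rfl hjI
          unfold pairCond at hpc
          by_cases hc : (I.filter (fun i => i < j)).card % 2 = 0
          · rw [if_pos hc] at hpc
            rcases hpc with ⟨ha, hb⟩ | ⟨ha, hb⟩ <;> simp [mkPair, hjI, dots, ha, hb, hc]
          · rw [if_neg hc] at hpc
            rcases hpc with ⟨ha, hb⟩ | ⟨ha, hb⟩ <;> simp [mkPair, hjI, dots, ha, hb, hc]
    · -- right inverse : dots (mkPair I S).1 \ I = S
      intro S hS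
      rw [Finset.mem_powerset] at hS
      ext j
      simp only [Finset.mem_sdiff, dots, Finset.mem_filter, Finset.mem_univ, true_and,
        mkPair]
      by_cases hjI : j ∈ I
      · simp only [hjI, if_true, not_true, and_false, false_iff]
        intro hjS
        exact absurd (hS hjS) (by simp [hjI])
      · by_cases hjS : j ∈ S
        · simp [hjI, hjS]
        · simp only [hjI, hjS, if_false, not_false_iff, and_true, iff_false]
          intro h
          have h' := (Finset.mem_filter.mp h).2
          revert h'
          simp only [hjI, hjS, if_false]
          split <;> simp
  rw [Finset.sum_congr rfl key, Finset.sum_const, Finset.card_powersetCard,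
    Finset.card_univ, Fintype.card_fin, smul_eq_mul]
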